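/- Fix K ≥ 1 and positive reals N₁,…,N_K. For b = (b₁,…,b_K) ∈ (0,∞)^K define f_K(b) as the K-dimensional Lebesgue measure of the set { x ∈ (0,∞)^K : Σ_{l=1}^k N_l·log₂(1+x_l) < Σ_{l=1}^k b_l for every k ∈ {1,…,K} }. Then for each index r ∈ {1,…,K} and each fixed choice of positive values b_j (j ≠ r), the function b_r ↦ f_K(b₁,…,b_K) is finite, monotonically nondecreasing and convex on (0,∞). -/

import Mathlib

open MeasureTheory Real

/-- The high-SNR outage region of `K`-round VL-XP-HARQ:
`{x ∈ (0,∞)^K : Σ_{l=1}^k N_l log₂(1+x_l) < Σ_{l=1}^k b_l for every k}`. -/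
def outRegion {K : ℕ} (N b : Fin K → ℝ) : Set (Fin K → ℝ) :=
  {x | (∀ i, 0 < x i) ∧
    ∀ k : Fin K, ∑ l ∈ Finset.Iic k, N l * logb 2 (1 + x l)
      < ∑ l ∈ Finset.Iic k, b l}

/-- `f_K(b)`: the `K`-dimensional Lebesgue measure of the outage region. -/
noncomputable def fK {K : ℕ} (N b : Fin K → ℝ) : ℝ :=
  (volume (outRegion N b)).toReal

section Aux

lemma measurableSet_outRegion {K : ℕ} (N b : Fin K → ℝ) :
    MeasurableSet (outRegion N b) := by
  have hlog : ∀ l : Fin K, Measurable fun x : Fin K → ℝ => N l * logb 2 (1 + x l) := by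
    intro l
    have : Measurable fun x : Fin K → ℝ => logb 2 (1 + x l) := by
      simp only [Real.logb]
      exact (Real.measurable_log.comp (measurable_const.add (measurable_pi_apply l))).div_const _
    exact this.const_mul _
  have h1 : MeasurableSet {x : Fin K → ℝ | ∀ i, 0 < x i} := by
    rw [Set.setOf_forall]
    exact MeasurableSet.iInter fun i =>
      measurableSet_lt measurable_const (measurable_pi_apply i)
  have h2 : MeasurableSet {x : Fin K → ℝ | ∀ k : Fin K,
      ∑ l ∈ Finset.Iic k, N l * logb 2 (1 + x l) < ∑ l ∈ Finset.Iic k, b l} := by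
    rw [Set.setOf_forall]
    refine MeasurableSet.iInter fun k => measurableSet_lt ?_ measurable_const
    exact Finset.measurable_sum _ fun l _ => hlog l
  exact h1.inter h2

lemma outRegion_subset_box {K : ℕ} (N b : Fin K → ℝ) (hN : ∀ i, 0 < N i) :
    outRegion N b ⊆ Set.pi Set.univ
      (fun i => Set.Ioo 0 (Real.exp ((∑ l, |b l|) * Real.log 2 / N i))) := by
  intro x hx
  obtain ⟨hpos, hlt⟩ := hx
  intro i _
  set B : ℝ := ∑ l, |b l| with hB
  have hterm : ∀ l : Fin K, 0 ≤ N l * logb 2 (1 + x l) := fun l =>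
    mul_nonneg (hN l).le (Real.logb_nonneg one_lt_two (by linarith [hpos l]))
  have h1 : N i * logb 2 (1 + x i) ≤ ∑ l ∈ Finset.Iic i, N l * logb 2 (1 + x l) :=
    Finset.single_le_sum (fun l _ => hterm l) (Finset.mem_Iic.2 le_rfl)
  have h2 : ∑ l ∈ Finset.Iic i, b l ≤ B := by
    calc ∑ l ∈ Finset.Iic i, b l ≤ ∑ l ∈ Finset.Iic i, |b l| :=
          Finset.sum_le_sum fun l _ => le_abs_self _
      _ ≤ B := Finset.sum_le_sum_of_subset_of_nonneg (Finset.subset_univ _)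
          (fun l _ _ => abs_nonneg _)
  have h3 : N i * logb 2 (1 + x i) < B := lt_of_le_of_lt h1 (lt_of_lt_of_le (hlt i) h2)
  have hlog2 : (0:ℝ) < Real.log 2 := Real.log_pos one_lt_two
  have h1x : (0:ℝ) < 1 + x i := by linarith [hpos i]
  have h4 : Real.log (1 + x i) < B * Real.log 2 / N i := by
    rw [lt_div_iff₀ (hN i)]
    have := h3
    rw [Real.logb] at this
    have h5 : N i * (Real.log (1 + x i) / Real.log 2) * Real.log 2 < B * Real.log 2 :=
      (mul_lt_mul_iff_of_pos_right hlog2).2 this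
    calc Real.log (1 + x i) * N i = N i * (Real.log (1 + x i) / Real.log 2) * Real.log 2 := by
          field_simp
      _ < B * Real.log 2 := h5
  have h6 : 1 + x i < Real.exp (B * Real.log 2 / N i) := (Real.log_lt_iff_lt_exp h1x).1 h4
  exact ⟨hpos i, by linarith⟩

lemma volume_outRegion_ne_top {K : ℕ} (N b : Fin K → ℝ) (hN : ∀ i, 0 < N i) :
    volume (outRegion N b) ≠ ⊤ := by
  have := measure_mono (μ := volume) (outRegion_subset_box N b hN)
  refine ne_top_of_le_ne_top ?_ this
  rw [volume_pi_pi]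
  exact (ENNReal.prod_lt_top fun i _ => by
    rw [Real.volume_Ioo]; exact ENNReal.ofReal_lt_top).ne

lemma outRegion_mono {K : ℕ} (N b : Fin K → ℝ) (r : Fin K) {s t : ℝ} (hst : s ≤ t) :
    outRegion N (Function.update b r s) ⊆ outRegion N (Function.update b r t) := by
  rintro x ⟨h1, h2⟩
  refine ⟨h1, fun k => lt_of_lt_of_le (h2 k) (Finset.sum_le_sum fun l _ => ?_)⟩
  rcases eq_or_ne l r with rfl | hl
  · simp [hst]
  · simp [Function.update_of_ne hl]

variable {n : ℕ} (N b : Fin (n+1) → ℝ) (r : Fin (n+1))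

/-- Coordinates other than `r`, embedded with `0` at `r`. -/
noncomputable def Xv (v : Fin n → ℝ) : Fin (n+1) → ℝ := r.insertNth 0 v

/-- the "base" condition, involving only the coordinates other than `r`. -/
def baseCond (v : Fin n → ℝ) : Prop :=
  (∀ j, 0 < v j) ∧ ∀ k < r, ∑ l ∈ Finset.Iic k, N l * logb 2 (1 + Xv r v l)
    < ∑ l ∈ Finset.Iic k, b l

noncomputable def Dk (k : Fin (n+1)) (v : Fin n → ℝ) : ℝ :=
  ∑ l ∈ (Finset.Iic k).erase r, b l
    - ∑ l ∈ (Finset.Iic k).erase r, N l * logb 2 (1 + Xv r v l)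

noncomputable def dd (v : Fin n → ℝ) : ℝ :=
  (Finset.Ici r).inf' ⟨r, Finset.mem_Ici.2 le_rfl⟩ (fun k => Dk N b r k v)

lemma insertNth_mem_outRegion_iff (hN : ∀ i, 0 < N i) (t y : ℝ) (v : Fin n → ℝ) :
    r.insertNth y v ∈ outRegion N (Function.update b r t) ↔
      baseCond N b r v ∧ y ∈ Set.Ioo 0 (Real.exp ((t + dd N b r v) * Real.log 2 / N r) - 1) := by
  set x : Fin (n+1) → ℝ := r.insertNth y v with hx
  have hxr : x r = y := by rw [hx]; exact @Fin.insertNth_apply_same n (fun _ => ℝ) r y v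
  have hxl : ∀ l, l ≠ r → x l = Xv r v l := by
    intro l hl
    obtain ⟨j, rfl⟩ := Fin.exists_succAbove_eq hl
    simp only [hx, Xv, Fin.insertNth_apply_succAbove]
  have hpos_iff : (∀ i, 0 < x i) ↔ 0 < y ∧ ∀ j, 0 < v j := by
    rw [Fin.forall_iff_succAbove r, hxr]
    constructor
    · rintro ⟨h1, h2⟩
      exact ⟨h1, fun j => by
        have := h2 j; rwa [hx, Fin.insertNth_apply_succAbove] at this⟩
    · rintro ⟨h1, h2⟩
      exact ⟨h1, fun j => by rw [hx, Fin.insertNth_apply_succAbove]; exact h2 j⟩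
  have hlt_split : (∀ k : Fin (n+1), ∑ l ∈ Finset.Iic k, N l * logb 2 (1 + x l)
        < ∑ l ∈ Finset.Iic k, Function.update b r t l) ↔
      ((∀ k < r, ∑ l ∈ Finset.Iic k, N l * logb 2 (1 + Xv r v l) < ∑ l ∈ Finset.Iic k, b l) ∧
       (∀ k ∈ Finset.Ici r, N r * logb 2 (1 + y) < t + Dk N b r k v)) := by
    have small : ∀ k : Fin (n+1), k < r →
        ((∑ l ∈ Finset.Iic k, N l * logb 2 (1 + x l)
          < ∑ l ∈ Finset.Iic k, Function.update b r t l) ↔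
         (∑ l ∈ Finset.Iic k, N l * logb 2 (1 + Xv r v l) < ∑ l ∈ Finset.Iic k, b l)) := by
      intro k hk
      have h1 : ∑ l ∈ Finset.Iic k, N l * logb 2 (1 + x l)
          = ∑ l ∈ Finset.Iic k, N l * logb 2 (1 + Xv r v l) := by
        refine Finset.sum_congr rfl fun l hl => ?_
        have : l ≠ r := ne_of_lt (lt_of_le_of_lt (Finset.mem_Iic.1 hl) hk)
        rw [hxl l this]
      have h2 : ∑ l ∈ Finset.Iic k, Function.update b r t l = ∑ l ∈ Finset.Iic k, b l := by
        refine Finset.sum_congr rfl fun l hl => ?_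
        have : l ≠ r := ne_of_lt (lt_of_le_of_lt (Finset.mem_Iic.1 hl) hk)
        rw [Function.update_of_ne this]
      rw [h1, h2]
    have big : ∀ k : Fin (n+1), r ≤ k →
        ((∑ l ∈ Finset.Iic k, N l * logb 2 (1 + x l)
          < ∑ l ∈ Finset.Iic k, Function.update b r t l) ↔
         (N r * logb 2 (1 + y) < t + Dk N b r k v)) := by
      intro k hk
      have hrmem : r ∈ Finset.Iic k := Finset.mem_Iic.2 hk
      have h1 : ∑ l ∈ Finset.Iic k, N l * logb 2 (1 + x l)
          = N r * logb 2 (1 + y)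
            + ∑ l ∈ (Finset.Iic k).erase r, N l * logb 2 (1 + Xv r v l) := by
        rw [← Finset.add_sum_erase _ _ hrmem, hxr]
        congr 1
        refine Finset.sum_congr rfl fun l hl => ?_
        rw [hxl l (Finset.ne_of_mem_erase hl)]
      have h2 : ∑ l ∈ Finset.Iic k, Function.update b r t l
          = t + ∑ l ∈ (Finset.Iic k).erase r, b l := by
        rw [← Finset.add_sum_erase _ _ hrmem, Function.update_self]
        congr 1
        exact Finset.sum_congr rfl fun l hl =>
          Function.update_of_ne (Finset.ne_of_mem_erase hl) _ _
      rw [h1, h2, Dk]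
      constructor <;> intro h <;> linarith
    constructor
    · intro h
      exact ⟨fun k hk => (small k hk).1 (h k),
        fun k hk => (big k (Finset.mem_Ici.1 hk)).1 (h k)⟩
    · rintro ⟨h1, h2⟩ k
      rcases lt_or_ge k r with hk | hk
      · exact (small k hk).2 (h1 k hk)
      · exact (big k hk).2 (h2 k (Finset.mem_Ici.2 hk))
  have hinf : (∀ k ∈ Finset.Ici r, N r * logb 2 (1 + y) < t + Dk N b r k v) ↔
      N r * logb 2 (1 + y) < t + dd N b r v := by
    have e : ∀ z : ℝ, z < dd N b r v ↔ ∀ k ∈ Finset.Ici r, z < Dk N b r k v :=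
      fun z => Finset.lt_inf'_iff _
    rw [show (N r * logb 2 (1 + y) < t + dd N b r v) ↔
        (N r * logb 2 (1 + y) - t < dd N b r v) from
      by constructor <;> intro h <;> linarith]
    rw [e]
    constructor <;> intro h k hk <;> have := h k hk <;> linarith
  have key : ∀ A : ℝ, ((0 < y ∧ ∀ j, 0 < v j) → (N r * logb 2 (1 + y) < A ↔
      y < Real.exp (A * Real.log 2 / N r) - 1)) := by
    intro A hy
    have h1y : (0:ℝ) < 1 + y := by linarith [hy.1]
    have hlog2 : (0:ℝ) < Real.log 2 := Real.log_pos one_lt_two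
    rw [lt_sub_iff_add_lt, show (y + 1 : ℝ) = 1 + y by ring, ← Real.log_lt_iff_lt_exp h1y,
      lt_div_iff₀ (hN r), Real.logb]
    constructor <;> intro h
    · have := (mul_lt_mul_iff_of_pos_right hlog2).2 h
      calc Real.log (1 + y) * N r
          = N r * (Real.log (1 + y) / Real.log 2) * Real.log 2 := by field_simp
        _ < A * Real.log 2 := this
    · have h' : N r * (Real.log (1 + y) / Real.log 2) * Real.log 2 < A * Real.log 2 := by
        calc N r * (Real.log (1 + y) / Real.log 2) * Real.log 2
            = Real.log (1 + y) * N r := by field_simp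
          _ < A * Real.log 2 := h
      exact lt_of_mul_lt_mul_right h' hlog2.le
  constructor
  · rintro ⟨hpos, hlt⟩
    have hyv := hpos_iff.1 hpos
    obtain ⟨h1, h2⟩ := hlt_split.1 hlt
    have h3 := hinf.1 h2
    exact ⟨⟨hyv.2, h1⟩, ⟨hyv.1, (key _ hyv).1 h3⟩⟩
  · rintro ⟨⟨hv, h1⟩, hy, hy2⟩
    refine ⟨hpos_iff.2 ⟨hy, hv⟩, hlt_split.2 ⟨h1, hinf.2 ?_⟩⟩
    exact (key _ ⟨hy, hv⟩).2 hy2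

end Aux

section Fubini
open scoped Classical

variable {n : ℕ} (N b : Fin (n+1) → ℝ) (r : Fin (n+1))

noncomputable def sliceVol (t : ℝ) (v : Fin n → ℝ) : ENNReal :=
  volume {y : ℝ | r.insertNth y v ∈ outRegion N (Function.update b r t)}

lemma sliceVol_eq (hN : ∀ i, 0 < N i) (t : ℝ) (v : Fin n → ℝ) :
    sliceVol N b r t v = if baseCond N b r v then
      ENNReal.ofReal (Real.exp ((t + dd N b r v) * Real.log 2 / N r) - 1) else 0 := by
  rw [sliceVol]
  by_cases hbase : baseCond N b r v
  · rw [if_pos hbase]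
    have : {y : ℝ | r.insertNth y v ∈ outRegion N (Function.update b r t)}
        = Set.Ioo 0 (Real.exp ((t + dd N b r v) * Real.log 2 / N r) - 1) := by
      ext y
      rw [Set.mem_setOf_eq, insertNth_mem_outRegion_iff N b r hN t y v]
      simp [hbase]
    rw [this, Real.volume_Ioo, sub_zero]
  · rw [if_neg hbase]
    have : {y : ℝ | r.insertNth y v ∈ outRegion N (Function.update b r t)} = ∅ := by
      ext y
      rw [Set.mem_setOf_eq, insertNth_mem_outRegion_iff N b r hN t y v]
      simp [hbase]
    rw [this, measure_empty]

lemma volume_outRegion_eq (t : ℝ) :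
    volume (outRegion N (Function.update b r t)) = ∫⁻ v, sliceVol N b r t v := by
  set S := outRegion N (Function.update b r t) with hS
  have hSm : MeasurableSet S := measurableSet_outRegion _ _
  set e := MeasurableEquiv.piFinSuccAbove (fun _ : Fin (n+1) => ℝ) r with he
  have hpres : MeasurePreserving e.symm
      ((volume : Measure ℝ).prod (volume : Measure (Fin n → ℝ))) volume :=
    (volume_preserving_piFinSuccAbove (fun _ : Fin (n+1) => ℝ) r).symm
  have h1 : volume S = ((volume : Measure ℝ).prod (volume : Measure (Fin n → ℝ)))
      (e.symm ⁻¹' S) := (hpres.measure_preimage hSm.nullMeasurableSet).symm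
  have h2 : e.symm ⁻¹' S = {p : ℝ × (Fin n → ℝ) | r.insertNth p.1 p.2 ∈ S} := by
    ext p
    simp only [Set.mem_preimage, he, MeasurableEquiv.piFinSuccAbove_symm_apply,
      Fin.insertNthEquiv, Equiv.coe_fn_mk, Set.mem_setOf_eq]
  rw [h1, Measure.prod_apply_symm (e.symm.measurable hSm), h2]
  rfl

lemma measurable_sliceVol (t : ℝ) : Measurable (sliceVol N b r t) := by
  set S := outRegion N (Function.update b r t) with hS
  have hSm : MeasurableSet S := measurableSet_outRegion _ _
  set e := MeasurableEquiv.piFinSuccAbove (fun _ : Fin (n+1) => ℝ) r with he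
  have hTm : MeasurableSet (e.symm ⁻¹' S) := e.symm.measurable hSm
  have h2 : e.symm ⁻¹' S = {p : ℝ × (Fin n → ℝ) | r.insertNth p.1 p.2 ∈ S} := by
    ext p
    simp only [Set.mem_preimage, he, MeasurableEquiv.piFinSuccAbove_symm_apply,
      Fin.insertNthEquiv, Equiv.coe_fn_mk, Set.mem_setOf_eq]
  rw [h2] at hTm
  exact measurable_measure_prodMk_right (μ := (volume : Measure ℝ)) hTm

lemma sliceVol_convex (hN : ∀ i, 0 < N i) (p q w1 w2 : ℝ) (hw1 : 0 ≤ w1) (hw2 : 0 ≤ w2)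
    (hw : w1 + w2 = 1) (v : Fin n → ℝ) :
    sliceVol N b r (w1 * p + w2 * q) v
      ≤ ENNReal.ofReal w1 * sliceVol N b r p v + ENNReal.ofReal w2 * sliceVol N b r q v := by
  rw [sliceVol_eq N b r hN, sliceVol_eq N b r hN, sliceVol_eq N b r hN]
  by_cases hbase : baseCond N b r v
  · simp only [if_pos hbase]
    set d := dd N b r v
    set c := Real.log 2 / N r with hc
    have harg : ∀ s : ℝ, (s + d) * Real.log 2 / N r = (s + d) * c := by
      intro s; rw [hc]; ring
    rw [harg, harg, harg]
    have hexp := convexOn_exp.2 (Set.mem_univ ((p + d) * c)) (Set.mem_univ ((q + d) * c))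
      hw1 hw2 hw
    simp only [smul_eq_mul] at hexp
    have harg2 : w1 * ((p + d) * c) + w2 * ((q + d) * c) = (w1 * p + w2 * q + d) * c := by
      linear_combination d * c * hw
    rw [harg2] at hexp
    have hstep : Real.exp ((w1 * p + w2 * q + d) * c) - 1
        ≤ w1 * (Real.exp ((p + d) * c) - 1) + w2 * (Real.exp ((q + d) * c) - 1) := by
      have : w1 * (Real.exp ((p + d) * c) - 1) + w2 * (Real.exp ((q + d) * c) - 1)
          = w1 * Real.exp ((p + d) * c) + w2 * Real.exp ((q + d) * c) - 1 := by
        linear_combination (-1 : ℝ) * hw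
      linarith
    calc ENNReal.ofReal (Real.exp ((w1 * p + w2 * q + d) * c) - 1)
        ≤ ENNReal.ofReal (w1 * (Real.exp ((p + d) * c) - 1)
            + w2 * (Real.exp ((q + d) * c) - 1)) := ENNReal.ofReal_le_ofReal hstep
      _ ≤ ENNReal.ofReal (w1 * (Real.exp ((p + d) * c) - 1))
            + ENNReal.ofReal (w2 * (Real.exp ((q + d) * c) - 1)) := ENNReal.ofReal_add_le
      _ = ENNReal.ofReal w1 * ENNReal.ofReal (Real.exp ((p + d) * c) - 1)
            + ENNReal.ofReal w2 * ENNReal.ofReal (Real.exp ((q + d) * c) - 1) := by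
          rw [ENNReal.ofReal_mul hw1, ENNReal.ofReal_mul hw2]
  · simp [if_neg hbase]

end Fubini

/-- **Finiteness, monotonicity and convexity of the asymptotic outage volume in the
number of information bits of any single round** (Theorem 3): for each `r` and fixed
positive `b_j` (`j ≠ r`), the map `b_r ↦ f_K(b₁,…,b_K)` is finite, nondecreasing and
convex on `(0,∞)`. -/
theorem fK_finite_monotone_convex
    (K : ℕ) (hK : 1 ≤ K) (N : Fin K → ℝ) (hN : ∀ i, 0 < N i)
    (r : Fin K) (b : Fin K → ℝ) (hb : ∀ i, i ≠ r → 0 < b i) :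
    (∀ t ∈ Set.Ioi (0 : ℝ), volume (outRegion N (Function.update b r t)) ≠ ⊤) ∧
    MonotoneOn (fun t : ℝ => fK N (Function.update b r t)) (Set.Ioi 0) ∧
    ConvexOn ℝ (Set.Ioi 0) (fun t : ℝ => fK N (Function.update b r t)) := by
  obtain ⟨n, rfl⟩ : ∃ n, K = n + 1 := ⟨K - 1, by omega⟩
  have hfin : ∀ t : ℝ, volume (outRegion N (Function.update b r t)) ≠ ⊤ := fun t =>
    volume_outRegion_ne_top N (Function.update b r t) hN
  refine ⟨fun t _ => hfin t, ?_, ?_⟩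
  · intro s _ t _ hst
    exact ENNReal.toReal_mono (hfin t) (measure_mono (outRegion_mono N b r hst))
  · refine ⟨convex_Ioi 0, ?_⟩
    intro p hp q hq w1 w2 hw1 hw2 hw
    simp only [smul_eq_mul]
    have hkey : volume (outRegion N (Function.update b r (w1 * p + w2 * q)))
        ≤ ENNReal.ofReal w1 * volume (outRegion N (Function.update b r p))
          + ENNReal.ofReal w2 * volume (outRegion N (Function.update b r q)) := by
      rw [volume_outRegion_eq, volume_outRegion_eq, volume_outRegion_eq]
      calc ∫⁻ v, sliceVol N b r (w1 * p + w2 * q) v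
          ≤ ∫⁻ v, (ENNReal.ofReal w1 * sliceVol N b r p v
              + ENNReal.ofReal w2 * sliceVol N b r q v) :=
            lintegral_mono fun v => sliceVol_convex N b r hN p q w1 w2 hw1 hw2 hw v
        _ = ENNReal.ofReal w1 * (∫⁻ v, sliceVol N b r p v)
              + ENNReal.ofReal w2 * (∫⁻ v, sliceVol N b r q v) := by
            rw [lintegral_add_left ((measurable_sliceVol N b r p).const_mul _),
              lintegral_const_mul _ (measurable_sliceVol N b r p),
              lintegral_const_mul _ (measurable_sliceVol N b r q)]
    have hne1 : ENNReal.ofReal w1 * volume (outRegion N (Function.update b r p)) ≠ ⊤ :=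
      ENNReal.mul_ne_top ENNReal.ofReal_ne_top (hfin p)
    have hne2 : ENNReal.ofReal w2 * volume (outRegion N (Function.update b r q)) ≠ ⊤ :=
      ENNReal.mul_ne_top ENNReal.ofReal_ne_top (hfin q)
    have := ENNReal.toReal_mono (by exact ENNReal.add_ne_top.2 ⟨hne1, hne2⟩) hkey
    rw [ENNReal.toReal_add hne1 hne2, ENNReal.toReal_mul, ENNReal.toReal_mul,
      ENNReal.toReal_ofReal hw1, ENNReal.toReal_ofReal hw2] at this
    exact this
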